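/- arXiv:2004.05406 — 2 statements merged into one kernel-verified Lean document; each statement's English description precedes it below -/
import Mathlib

section
/- Let U_1,…,U_N : ℝ → ℂ^{d×d} solve dU_j/dt = κ (U_c U_j† U_j − U_j U_c† U_j), where U_c := (1/N) Σ_k U_k. Then U_j(t)† U_j(t) is constant in time for each j. -/
open Matrix

attribute [local instance] Matrix.linftyOpNormedRing Matrix.linftyOpNormedAlgebra
  Matrix.linftyOpNormedSpace

theorem stmt_8 {d N : ℕ} (κ : ℝ) (U : Fin N → ℝ → Matrix (Fin d) (Fin d) ℂ)
    (Uc : ℝ → Matrix (Fin d) (Fin d) ℂ)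
    (hUc : ∀ t, Uc t = (N : ℂ)⁻¹ • ∑ k, U k t)
    (hU : ∀ j t, HasDerivAt (U j)
      (κ • (Uc t * (U j t)ᴴ * U j t - U j t * (Uc t)ᴴ * U j t)) t) :
    ∀ j t, (U j t)ᴴ * U j t = (U j 0)ᴴ * U j 0 := by
  intro j t
  have key : ∀ s : ℝ, HasDerivAt (fun u => (U j u)ᴴ * U j u) 0 s := by
    intro s
    have h1 := hU j s
    haveI : @ContinuousStar (Matrix (Fin d) (Fin d) ℂ) (PseudoMetricSpace.toUniformSpace.toTopologicalSpace) _ := ⟨by exact Continuous.matrix_conjTranspose continuous_id⟩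
    have h2 : HasDerivAt (fun u => (U j u)ᴴ)
        (κ • (Uc s * (U j s)ᴴ * U j s - U j s * (Uc s)ᴴ * U j s))ᴴ s := h1.star
    have h3 := h2.mul h1
    have heq : (κ • (Uc s * (U j s)ᴴ * U j s - U j s * (Uc s)ᴴ * U j s))ᴴ * U j s +
        (U j s)ᴴ * (κ • (Uc s * (U j s)ᴴ * U j s - U j s * (Uc s)ᴴ * U j s)) = 0 := by
      simp [conjTranspose_smul, conjTranspose_sub, conjTranspose_mul, Matrix.sub_mul,
        Matrix.mul_sub, smul_sub, Matrix.mul_assoc]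
    rwa [heq] at h3
  have hdiff : Differentiable ℝ (fun u => (U j u)ᴴ * U j u) :=
    fun s => (key s).differentiableAt
  have hderiv : ∀ s, deriv (fun u => (U j u)ᴴ * U j u) s = 0 :=
    fun s => (key s).deriv
  exact is_const_of_deriv_eq_zero hdiff hderiv t 0
end

section
/- Barbalat's lemma: if f : [0,∞) → ℝ is uniformly continuous and lim_{t→∞} ∫_0^t f(s) ds exists (is finite), then lim_{t→∞} f(t) = 0. -/
open Filter

theorem stmt_17 (f : ℝ → ℝ)
    (hf : UniformContinuousOn f (Set.Ici (0 : ℝ)))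
    (L : ℝ)
    (hL : Tendsto (fun t => ∫ s in (0 : ℝ)..t, f s) atTop (nhds L)) :
    Tendsto f atTop (nhds 0) := by
  have hcont : ContinuousOn f (Set.Ici (0:ℝ)) := hf.continuousOn
  have hint : ∀ a b : ℝ, 0 ≤ a → a ≤ b → IntervalIntegrable f MeasureTheory.volume a b := by
    intro a b ha hab
    apply ContinuousOn.intervalIntegrable
    apply hcont.mono
    rw [Set.uIcc_of_le hab]
    intro x hx
    exact le_trans ha hx.1
  rw [Metric.tendsto_nhds]
  intro ε hε
  rw [Metric.uniformContinuousOn_iff] at hf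
  obtain ⟨δ, hδ, hδ'⟩ := hf (ε/2) (by linarith)
  set η := δ/2 with hη
  have hηpos : 0 < η := by positivity
  have hdiff : Tendsto (fun t => (∫ s in (0:ℝ)..(t+η), f s) - ∫ s in (0:ℝ)..t, f s)
      atTop (nhds 0) := by
    have h1 : Tendsto (fun t => ∫ s in (0:ℝ)..(t+η), f s) atTop (nhds L) :=
      hL.comp (tendsto_atTop_add_const_right _ η tendsto_id)
    simpa using h1.sub hL
  rw [Metric.tendsto_nhds] at hdiff
  have hev := hdiff (η * ε / 2) (by positivity)
  rw [eventually_atTop] at hev ⊢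
  obtain ⟨T, hT⟩ := hev
  refine ⟨max T 0, fun t ht => ?_⟩
  have ht0 : (0:ℝ) ≤ t := le_trans (le_max_right _ _) ht
  have htT : T ≤ t := le_trans (le_max_left _ _) ht
  by_contra hcon
  push_neg at hcon
  rw [Real.dist_eq, sub_zero] at hcon
  have hclose : ∀ s ∈ Set.Icc t (t+η), |f s - f t| < ε/2 := by
    intro s hs
    have hs0 : s ∈ Set.Ici (0:ℝ) := le_trans ht0 hs.1
    have hd : dist s t < δ := by
      rw [Real.dist_eq, abs_of_nonneg (by linarith [hs.1])]
      have := hs.2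
      linarith
    have := hδ' s hs0 t ht0 hd
    rwa [Real.dist_eq] at this
  have hInt : IntervalIntegrable f MeasureTheory.volume t (t+η) :=
    hint t (t+η) ht0 (by linarith)
  have hsum : (∫ s in (0:ℝ)..t, f s) + (∫ s in t..(t+η), f s) = ∫ s in (0:ℝ)..(t+η), f s :=
    intervalIntegral.integral_add_adjacent_intervals (hint 0 t le_rfl ht0) hInt
  have hdistT := hT t htT
  rw [Real.dist_eq, sub_zero] at hdistT
  have hd : |∫ s in t..(t+η), f s| < η * ε / 2 := by
    have heq : (∫ s in (0:ℝ)..(t+η), f s) - (∫ s in (0:ℝ)..t, f s)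
        = ∫ s in t..(t+η), f s := by linarith [hsum]
    rwa [heq] at hdistT
  rcases le_abs.mp hcon with h1 | h1
  · -- f t ≥ ε : f ≥ ε/2 on [t, t+η]
    have hlow : ∀ s ∈ Set.Icc t (t+η), ε/2 ≤ f s := by
      intro s hs
      have := hclose s hs
      have := abs_lt.mp this
      linarith [this.1, this.2]
    have hmono : (∫ _s in t..(t+η), (ε/2)) ≤ ∫ s in t..(t+η), f s :=
      intervalIntegral.integral_mono_on (by linarith) intervalIntegrable_const hInt hlow
    rw [intervalIntegral.integral_const, smul_eq_mul] at hmono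
    have : η * ε / 2 ≤ ∫ s in t..(t+η), f s := by
      have : (t + η - t) * (ε/2) = η * ε / 2 := by ring
      linarith [hmono, this]
    have := le_trans this (le_abs_self _)
    linarith
  · -- f t ≤ -ε
    have hhigh : ∀ s ∈ Set.Icc t (t+η), f s ≤ -(ε/2) := by
      intro s hs
      have := abs_lt.mp (hclose s hs)
      linarith [this.1, this.2]
    have hmono : (∫ s in t..(t+η), f s) ≤ ∫ _s in t..(t+η), (-(ε/2)) :=
      intervalIntegral.integral_mono_on (by linarith) hInt intervalIntegrable_const hhigh
    rw [intervalIntegral.integral_const, smul_eq_mul] at hmono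
    have hle : (∫ s in t..(t+η), f s) ≤ -(η * ε / 2) := by
      have : (t + η - t) * (-(ε/2)) = -(η * ε / 2) := by ring
      linarith
    have := neg_le_abs (∫ s in t..(t+η), f s)
    linarith
end
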